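/- If G is a connected locally Dirac graph of order n ≥ 3, then the edge-connectivity of G equals the minimum degree of G. -/

import Mathlib

noncomputable def locDeg {V : Type*} (G : SimpleGraph V) (v u : V) : ℕ :=
  (G.neighborSet v ∩ G.neighborSet u).ncard

noncomputable def degN {V : Type*} (G : SimpleGraph V) (v : V) : ℕ :=
  (G.neighborSet v).ncard

def LocallyDirac {V : Type*} (G : SimpleGraph V) : Prop :=
  ∀ v u : V, G.Adj v u → degN G v ≤ 2 * locDeg G v u

/-- Minimum degree of `G`. -/
noncomputable def minDeg {V : Type*} [Fintype V] (G : SimpleGraph V) : ℕ :=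
  sInf {n | ∃ v : V, degN G v = n}

/-- Edge-connectivity of `G`: the least number of edges whose deletion disconnects `G`. -/
noncomputable def edgeConn {V : Type*} [Fintype V] (G : SimpleGraph V) : ℕ :=
  sInf {n | ∃ F : Finset (Sym2 V), ↑F ⊆ G.edgeSet ∧ F.card = n ∧
    ¬ (G.deleteEdges ↑F).Connected}

lemma count_le {V : Type*} (G : SimpleGraph V) [DecidableRel G.Adj] (F : Finset (Sym2 V)) (S : Set V)
    (u : V) (hu : u ∈ S)
    (hcross : ∀ p q, G.Adj p q → p ∈ S → q ∉ S → s(p, q) ∈ F)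
    (Af Bf : Finset V)
    (hA : ∀ x ∈ Af, G.Adj u x ∧ x ∈ S)
    (hB : ∀ y ∈ Bf, G.Adj u y ∧ y ∉ S) :
    Bf.card + ∑ y ∈ Bf, (Af.filter (fun x => G.Adj y x)).card ≤ F.card := by
  classical
  set E1 := Bf.image (fun y => s(u, y)) with hE1
  set E2 := Bf.biUnion (fun y => (Af.filter (fun x => G.Adj y x)).image (fun x => s(x, y))) with hE2
  have hsub : E1 ∪ E2 ⊆ F := by
    intro e he
    rcases Finset.mem_union.1 he with h | h
    · rcases Finset.mem_image.1 h with ⟨y, hy, rfl⟩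
      exact hcross u y (hB y hy).1 hu (hB y hy).2
    · rcases Finset.mem_biUnion.1 h with ⟨y, hy, h'⟩
      rcases Finset.mem_image.1 h' with ⟨x, hx, rfl⟩
      rcases Finset.mem_filter.1 hx with ⟨hxA, hadj⟩
      exact hcross x y hadj.symm (hA x hxA).2 (hB y hy).2
  have h1 : E1.card = Bf.card := by
    apply Finset.card_image_of_injOn
    intro y hy y' hy' he
    rcases Sym2.eq_iff.1 he with ⟨_, h⟩ | ⟨h, h'⟩
    · exact h
    · exact absurd (h ▸ hu) (hB y' hy').2
  have h2 : E2.card = ∑ y ∈ Bf, (Af.filter (fun x => G.Adj y x)).card := by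
    rw [hE2, Finset.card_biUnion]
    · apply Finset.sum_congr rfl
      intro y hy
      apply Finset.card_image_of_injOn
      intro x hx x' hx' he
      rcases Sym2.eq_iff.1 he with ⟨h, _⟩ | ⟨h, h'⟩
      · exact h
      · exfalso
        have hx'S : x' ∈ S := (hA x' (Finset.mem_filter.1 hx').1).2
        rw [← h'] at hx'S
        exact (hB y hy).2 hx'S
    · intro y hy y' hy' hne
      simp only [Finset.disjoint_left]
      intro e he he'
      rcases Finset.mem_image.1 he with ⟨x, hx, rfl⟩
      rcases Finset.mem_image.1 he' with ⟨x', hx', heq⟩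
      rcases Sym2.eq_iff.1 heq with ⟨h, h'⟩ | ⟨h, h'⟩
      · exact hne h'.symm
      · have hx'S : x' ∈ S := (hA x' (Finset.mem_filter.1 hx').1).2
        rw [h] at hx'S
        exact (hB y hy).2 hx'S
  have hdisj : Disjoint E1 E2 := by
    simp only [Finset.disjoint_left]
    intro e he he'
    rcases Finset.mem_image.1 he with ⟨y, hy, rfl⟩
    rcases Finset.mem_biUnion.1 he' with ⟨y', hy', h'⟩
    rcases Finset.mem_image.1 h' with ⟨x, hx, heq⟩
    rcases Sym2.eq_iff.1 heq with ⟨h, h'⟩ | ⟨h, h'⟩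
    · exact G.irrefl (h ▸ (hA x (Finset.mem_filter.1 hx).1).1)
    · exact absurd (h' ▸ hu) (hB y' hy').2
  calc Bf.card + ∑ y ∈ Bf, (Af.filter (fun x => G.Adj y x)).card
      = (E1 ∪ E2).card := by rw [Finset.card_union_of_disjoint hdisj, h1, h2]
    _ ≤ F.card := Finset.card_le_card hsub

lemma count_le' {V : Type*} (G : SimpleGraph V) [DecidableRel G.Adj] (F : Finset (Sym2 V)) (S : Set V)
    (u : V) (hu : u ∈ S)
    (hcross : ∀ p q, G.Adj p q → p ∈ S → q ∉ S → s(p, q) ∈ F)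
    (Af Bf : Finset V)
    (hA : ∀ x ∈ Af, G.Adj u x ∧ x ∈ S)
    (hB : ∀ y ∈ Bf, G.Adj u y ∧ y ∉ S) :
    Bf.card + ∑ x ∈ Af, (Bf.filter (fun y => G.Adj x y)).card ≤ F.card := by
  classical
  set E1 := Bf.image (fun y => s(u, y)) with hE1
  set E2 := Af.biUnion (fun x => (Bf.filter (fun y => G.Adj x y)).image (fun y => s(x, y))) with hE2
  have hsub : E1 ∪ E2 ⊆ F := by
    intro e he
    rcases Finset.mem_union.1 he with h | h
    · rcases Finset.mem_image.1 h with ⟨y, hy, rfl⟩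
      exact hcross u y (hB y hy).1 hu (hB y hy).2
    · rcases Finset.mem_biUnion.1 h with ⟨x, hx, h'⟩
      rcases Finset.mem_image.1 h' with ⟨y, hy, rfl⟩
      rcases Finset.mem_filter.1 hy with ⟨hyB, hadj⟩
      exact hcross x y hadj (hA x hx).2 (hB y hyB).2
  have h1 : E1.card = Bf.card := by
    apply Finset.card_image_of_injOn
    intro y hy y' hy' he
    rcases Sym2.eq_iff.1 he with ⟨_, h⟩ | ⟨h, h'⟩
    · exact h
    · exact absurd (h ▸ hu) (hB y' hy').2
  have h2 : E2.card = ∑ x ∈ Af, (Bf.filter (fun y => G.Adj x y)).card := by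
    rw [hE2, Finset.card_biUnion]
    · apply Finset.sum_congr rfl
      intro x hx
      apply Finset.card_image_of_injOn
      intro y hy y' hy' he
      rcases Sym2.eq_iff.1 he with ⟨_, h⟩ | ⟨h, h'⟩
      · exact h
      · exfalso
        have hxS : x ∈ S := (hA x hx).2
        rw [← h'] at hxS
        exact (hB y (Finset.mem_filter.1 hy).1).2 hxS
    · intro x hx x' hx' hne
      simp only [Finset.disjoint_left]
      intro e he he'
      rcases Finset.mem_image.1 he with ⟨y, hy, rfl⟩
      rcases Finset.mem_image.1 he' with ⟨y', hy', heq⟩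
      rcases Sym2.eq_iff.1 heq with ⟨h, h'⟩ | ⟨h, h'⟩
      · exact hne (h.symm)
      · have hxS : x' ∈ S := (hA x' hx').2
        rw [h] at hxS
        exact (hB y (Finset.mem_filter.1 hy).1).2 hxS
  have hdisj : Disjoint E1 E2 := by
    simp only [Finset.disjoint_left]
    intro e he he'
    rcases Finset.mem_image.1 he with ⟨y, hy, rfl⟩
    rcases Finset.mem_biUnion.1 he' with ⟨x, hx, h'⟩
    rcases Finset.mem_image.1 h' with ⟨y', hy', heq⟩
    rcases Sym2.eq_iff.1 heq with ⟨h, h'⟩ | ⟨h, h'⟩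
    · exact G.irrefl (h ▸ (hA x hx).1)
    · have hxS : x ∈ S := (hA x hx).2
      rw [h] at hxS
      exact (hB y hy).2 hxS
  calc Bf.card + ∑ x ∈ Af, (Bf.filter (fun y => G.Adj x y)).card
      = (E1 ∪ E2).card := by rw [Finset.card_union_of_disjoint hdisj, h1, h2]
    _ ≤ F.card := Finset.card_le_card hsub

lemma lemA {V : Type*} [Fintype V] (G : SimpleGraph V) [DecidableRel G.Adj]
    (hd : LocallyDirac G) (F : Finset (Sym2 V)) (S : Set V) (u : V) (hu : u ∈ S)
    (hcross : ∀ p q, G.Adj p q → p ∈ S → q ∉ S → s(p, q) ∈ F)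
    (hBne : (G.neighborSet u ∩ Sᶜ).Nonempty)
    (hcase : 2 ≤ (G.neighborSet u ∩ Sᶜ).ncard ∨
      (G.neighborSet u ∩ S).ncard ≤ (G.neighborSet u ∩ Sᶜ).ncard) :
    degN G u ≤ F.card := by
  classical
  set A : Set V := G.neighborSet u ∩ S with hA_def
  set B : Set V := G.neighborSet u ∩ Sᶜ with hB_def
  have hAfin : A.Finite := Set.toFinite _
  have hBfin : B.Finite := Set.toFinite _
  set Af := hAfin.toFinset with hAf_def
  set Bf := hBfin.toFinset with hBf_def
  have hAmem : ∀ x ∈ Af, G.Adj u x ∧ x ∈ S := by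
    intro x hx
    rw [Set.Finite.mem_toFinset] at hx
    exact ⟨hx.1, hx.2⟩
  have hBmem : ∀ y ∈ Bf, G.Adj u y ∧ y ∉ S := by
    intro y hy
    rw [Set.Finite.mem_toFinset] at hy
    exact ⟨hy.1, hy.2⟩
  have hsA : A.ncard = Af.card := Set.ncard_eq_toFinset_card A hAfin
  have hsB : B.ncard = Bf.card := Set.ncard_eq_toFinset_card B hBfin
  have hdeg : degN G u = A.ncard + B.ncard := by
    rw [degN, ← Set.inter_union_compl (G.neighborSet u) S]
    exact Set.ncard_union_eq (Set.disjoint_of_subset inf_le_right inf_le_right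
      disjoint_compl_right) hAfin hBfin
  set t := B.ncard with ht_def
  set s := A.ncard with hs_def
  -- per-vertex local Dirac bounds
  have keyA : ∀ x ∈ Af, degN G u ≤ 2 * ((s - 1) + (Bf.filter (fun y => G.Adj x y)).card) := by
    intro x hx
    obtain ⟨hadj, hxS⟩ := hAmem x hx
    have hloc := hd u x hadj
    have hBeq : B ∩ G.neighborSet x = ↑(Bf.filter (fun y => G.Adj x y)) := by
      ext z
      simp only [Finset.coe_filter, Set.mem_setOf_eq, hBf_def, Set.Finite.mem_toFinset,
        Set.mem_inter_iff, SimpleGraph.mem_neighborSet]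
    have hsub : G.neighborSet u ∩ G.neighborSet x ⊆ (A \ {x}) ∪ (B ∩ G.neighborSet x) := by
      intro z hz
      obtain ⟨hz1, hz2⟩ := hz
      by_cases hzS : z ∈ S
      · left
        refine ⟨⟨hz1, hzS⟩, ?_⟩
        simp only [Set.mem_singleton_iff]
        rintro rfl
        exact G.irrefl hz2
      · exact Or.inr ⟨⟨hz1, hzS⟩, hz2⟩
    have hle : locDeg G u x ≤ (s - 1) + (Bf.filter (fun y => G.Adj x y)).card := by
      calc locDeg G u x ≤ ((A \ {x}) ∪ (B ∩ G.neighborSet x)).ncard :=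
            Set.ncard_le_ncard hsub (Set.toFinite _)
        _ ≤ (A \ {x}).ncard + (B ∩ G.neighborSet x).ncard :=
            Set.ncard_union_le _ _
        _ = (s - 1) + (Bf.filter (fun y => G.Adj x y)).card := by
            rw [Set.ncard_diff_singleton_of_mem (by rw [Set.Finite.mem_toFinset] at hx; exact hx),
              hBeq, Set.ncard_coe_finset]
    exact hloc.trans (Nat.mul_le_mul_left 2 hle)
  have keyB : ∀ y ∈ Bf, degN G u ≤ 2 * ((t - 1) + (Af.filter (fun x => G.Adj y x)).card) := by
    intro y hy
    obtain ⟨hadj, hyS⟩ := hBmem y hy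
    have hloc := hd u y hadj
    have hAeq : A ∩ G.neighborSet y = ↑(Af.filter (fun x => G.Adj y x)) := by
      ext z
      simp only [Finset.coe_filter, Set.mem_setOf_eq, hAf_def, Set.Finite.mem_toFinset,
        Set.mem_inter_iff, SimpleGraph.mem_neighborSet]
    have hsub : G.neighborSet u ∩ G.neighborSet y ⊆ (B \ {y}) ∪ (A ∩ G.neighborSet y) := by
      intro z hz
      obtain ⟨hz1, hz2⟩ := hz
      by_cases hzS : z ∈ S
      · exact Or.inr ⟨⟨hz1, hzS⟩, hz2⟩
      · left
        refine ⟨⟨hz1, hzS⟩, ?_⟩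
        simp only [Set.mem_singleton_iff]
        rintro rfl
        exact G.irrefl hz2
    have hle : locDeg G u y ≤ (t - 1) + (Af.filter (fun x => G.Adj y x)).card := by
      calc locDeg G u y ≤ ((B \ {y}) ∪ (A ∩ G.neighborSet y)).ncard :=
            Set.ncard_le_ncard hsub (Set.toFinite _)
        _ ≤ (B \ {y}).ncard + (A ∩ G.neighborSet y).ncard :=
            Set.ncard_union_le _ _
        _ = (t - 1) + (Af.filter (fun x => G.Adj y x)).card := by
            rw [Set.ncard_diff_singleton_of_mem (by rw [Set.Finite.mem_toFinset] at hy; exact hy),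
              hAeq, Set.ncard_coe_finset]
    exact hloc.trans (Nat.mul_le_mul_left 2 hle)
  have htpos : 1 ≤ t := by
    rw [ht_def]
    exact Set.ncard_pos hBfin |>.2 hBne
  by_cases hst : s ≤ t
  · have hcle := count_le' G F S u hu hcross Af Bf hAmem hBmem
    by_cases hs0 : s = 0
    · have : Bf.card ≤ Bf.card + ∑ x ∈ Af, (Bf.filter (fun y => G.Adj x y)).card := Nat.le_add_right _ _
      omega
    · have hone : ∀ x ∈ Af, 1 ≤ (Bf.filter (fun y => G.Adj x y)).card := by
        intro x hx
        have h := keyA x hx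
        omega
      have hsum : Af.card ≤ ∑ x ∈ Af, (Bf.filter (fun y => G.Adj x y)).card := by
        rw [Finset.card_eq_sum_ones]
        exact Finset.sum_le_sum hone
      omega
  · have ht2 : 2 ≤ t := by
      rcases hcase with h | h
      · exact h
      · omega
    have hcle := count_le G F S u hu hcross Af Bf hAmem hBmem
    have hkey : ∀ y ∈ Bf, degN G u + 2 ≤ 2 * t + 2 * (Af.filter (fun x => G.Adj y x)).card := by
      intro y hy
      have h := keyB y hy
      omega
    have hsum : Bf.card * (degN G u + 2) ≤
        ∑ y ∈ Bf, (2 * t + 2 * (Af.filter (fun x => G.Adj y x)).card) := by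
      calc Bf.card * (degN G u + 2) = ∑ _y ∈ Bf, (degN G u + 2) := by
            rw [Finset.sum_const, smul_eq_mul]
        _ ≤ _ := Finset.sum_le_sum hkey
    rw [Finset.sum_add_distrib, Finset.sum_const, smul_eq_mul, ← Finset.mul_sum] at hsum
    set Sig := ∑ y ∈ Bf, (Af.filter (fun x => G.Adj y x)).card with hSig
    have h1 : t * (degN G u + 2) ≤ t * (2 * t) + 2 * Sig := by
      rw [hsB] at *
      exact hsum
    have h2 : t + Sig ≤ F.card := by
      rw [hsB] at *
      exact hcle
    have h4 : 2 * t + 1 ≤ degN G u := by omega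
    zify at h1 h2 ht2 h4 ⊢
    nlinarith [mul_nonneg (by linarith : (0:ℤ) ≤ (t:ℤ) - 2) (by linarith : (0:ℤ) ≤ (degN G u : ℤ) - 2 * t)]

lemma walk_cross {V : Type*} (G : SimpleGraph V) (S : Set V) :
    ∀ {x y : V}, G.Walk x y → x ∈ S → y ∉ S → ∃ a b, G.Adj a b ∧ a ∈ S ∧ b ∉ S := by
  intro x y p
  induction p with
  | nil => intro hx hy; exact absurd hx hy
  | @cons a b c hadj q ih =>
    intro hx hy
    by_cases hb : b ∈ S
    · exact ih hb hy
    · exact ⟨a, b, hadj, hx, hb⟩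

lemma minDeg_le {V : Type*} [Fintype V] (G : SimpleGraph V) (v : V) : minDeg G ≤ degN G v :=
  Nat.sInf_le ⟨v, rfl⟩

-- key: any disconnecting edge set has card ≥ minDeg
lemma minDeg_le_card {V : Type*} [Fintype V] (G : SimpleGraph V) (hc : G.Connected)
    (hd : LocallyDirac G) (F : Finset (Sym2 V)) (hnc : ¬ (G.deleteEdges ↑F).Connected) :
    minDeg G ≤ F.card := by
  classical
  have hnemp : Nonempty V := hc.nonempty
  have hpre : ¬ (G.deleteEdges ↑F).Preconnected := fun h => hnc ⟨h⟩
  rw [SimpleGraph.Preconnected] at hpre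
  push_neg at hpre
  obtain ⟨x, y, hxy⟩ := hpre
  set S : Set V := {z | (G.deleteEdges ↑F).Reachable x z} with hS_def
  have hxS : x ∈ S := SimpleGraph.Reachable.refl x
  have hyS : y ∉ S := hxy
  have hcross : ∀ p q, G.Adj p q → p ∈ S → q ∉ S → s(p, q) ∈ F := by
    intro p q hadj hp hq
    by_contra hmem
    exact hq (hp.trans (SimpleGraph.Adj.reachable (by
      rw [SimpleGraph.deleteEdges_adj]
      exact ⟨hadj, hmem⟩)))
  have hcross' : ∀ p q, G.Adj p q → p ∈ Sᶜ → q ∉ Sᶜ → s(p, q) ∈ F := by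
    intro p q hadj hp hq
    rw [Sym2.eq_swap]
    exact hcross q p hadj.symm (not_not.1 hq) hp
  obtain ⟨a, b, hab, haS, hbS⟩ := walk_cross G S ((hc.preconnected x y).some) hxS hyS
  set t := (G.neighborSet a ∩ Sᶜ).ncard with ht_def
  set s := (G.neighborSet a ∩ S).ncard with hs_def
  have hbmem : b ∈ G.neighborSet a ∩ Sᶜ := ⟨hab, hbS⟩
  have hBne : (G.neighborSet a ∩ Sᶜ).Nonempty := ⟨b, hbmem⟩
  by_cases hcase : 2 ≤ t ∨ s ≤ t
  · exact (minDeg_le G a).trans (lemA G hd F S a haS hcross hBne hcase)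
  · push_neg at hcase
    obtain ⟨ht1, hts⟩ := hcase
    have htpos : 1 ≤ t := Set.ncard_pos (Set.toFinite _) |>.2 hBne
    have ht : t = 1 := by omega
    -- N(a) ∩ Sᶜ = {b}
    have hsingle : G.neighborSet a ∩ Sᶜ = {b} := by
      obtain ⟨z, hz⟩ := Set.ncard_eq_one.1 ht
      rw [hz] at hbmem ⊢
      rw [Set.mem_singleton_iff] at hbmem
      rw [hbmem]
    -- common neighbor w of a and b exists
    have hdega : 1 ≤ degN G a := by
      rw [degN]
      exact Set.ncard_pos (Set.toFinite _) |>.2 ⟨b, hab⟩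
    have hlocpos : (G.neighborSet a ∩ G.neighborSet b).Nonempty := by
      rw [← Set.ncard_pos (Set.toFinite _)]
      have := hd a b hab
      rw [locDeg] at this
      omega
    obtain ⟨w, hw1, hw2⟩ := hlocpos
    have hwS : w ∈ S := by
      by_contra hwS
      have : w ∈ G.neighborSet a ∩ Sᶜ := ⟨hw1, hwS⟩
      rw [hsingle, Set.mem_singleton_iff] at this
      rw [this] at hw2
      exact G.irrefl hw2
    -- now apply lemA at b with set Sᶜ
    have hbS' : b ∈ Sᶜ := hbS
    have h2 : 2 ≤ (G.neighborSet b ∩ Sᶜᶜ).ncard := by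
      rw [compl_compl]
      refine (Set.one_lt_ncard (Set.toFinite _)).2 ⟨a, ⟨hab.symm, haS⟩, w, ⟨hw2, hwS⟩, ?_⟩
      intro h
      rw [h] at hw1
      exact G.irrefl hw1
    have hBne' : (G.neighborSet b ∩ Sᶜᶜ).Nonempty := by
      rw [compl_compl]
      exact ⟨a, hab.symm, haS⟩
    exact (minDeg_le G b).trans (lemA G hd F Sᶜ b hbS' hcross' hBne' (Or.inl h2))

theorem stmt8 {V : Type*} [Fintype V] (G : SimpleGraph V) (hc : G.Connected)
    (hd : LocallyDirac G) (h3 : 3 ≤ Fintype.card V) :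
    edgeConn G = minDeg G := by
  classical
  have hnemp : Nonempty V := hc.nonempty
  have hne : {n | ∃ v : V, degN G v = n}.Nonempty := by
    obtain ⟨v⟩ := hnemp
    exact ⟨degN G v, v, rfl⟩
  obtain ⟨v₀, hv₀⟩ : ∃ v : V, degN G v = minDeg G := Nat.sInf_mem hne
  set F := G.incidenceFinset v₀ with hF
  have hsub : ↑F ⊆ G.edgeSet := by
    intro e he
    rw [Finset.mem_coe, SimpleGraph.mem_incidenceFinset] at he
    exact G.incidenceSet_subset v₀ he
  have hcard : F.card = degN G v₀ := by
    rw [hF, SimpleGraph.card_incidenceFinset_eq_degree, SimpleGraph.degree, degN,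
      SimpleGraph.neighborFinset, Set.ncard_eq_toFinset_card']
  have hnc : ¬ (G.deleteEdges ↑F).Connected := by
    intro hcon
    obtain ⟨w, hw⟩ := Fintype.exists_ne_of_one_lt_card (by omega) v₀
    obtain ⟨p⟩ := hcon.preconnected v₀ w
    cases p with
    | nil => exact hw rfl
    | cons h q =>
      rw [SimpleGraph.deleteEdges_adj] at h
      refine h.2 ?_
      rw [Finset.mem_coe, SimpleGraph.mem_incidenceFinset]
      exact ⟨h.1, Sym2.mem_mk_left _ _⟩
  have hmem : F.card ∈ {n | ∃ F : Finset (Sym2 V), ↑F ⊆ G.edgeSet ∧ F.card = n ∧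
      ¬ (G.deleteEdges ↑F).Connected} := ⟨F, hsub, rfl, hnc⟩
  apply le_antisymm
  · calc edgeConn G ≤ F.card := Nat.sInf_le hmem
      _ = minDeg G := by rw [hcard, hv₀]
  · apply le_csInf ⟨F.card, hmem⟩
    rintro n ⟨F', hsub', rfl, hnc'⟩
    exact minDeg_le_card G hc hd F' hnc'
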